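/- Let k = k(n) satisfy k/√n → ∞ and k/n → 0. Define Ψ(x) = (1+x)log(1+x) − x and P_±(n,k) = ∏_{j=0}^{k+1}(1 ± j/n). Then log(P_−(n,k)/P_+(n,k)) = −(k²/n)(1+o(1)) → −∞, and log P_+(n,k) = nΨ(k/n) + o(1); consequently Q_{n,k} := (n/((k+1)(k+2)))·(P_+ − P_−) satisfies Q_{n,k} = (n/((k+1)(k+2)))·exp(nΨ(k/n) + o(1)). -/

import Mathlib

open Filter

/-- `P₊(n,k) = ∏_{j=0}^{k+1} (1 + j/n)`. -/
noncomputable def Pplus (n k : ℕ) : ℝ := ∏ j ∈ Finset.range (k + 2), (1 + (j : ℝ) / n)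

/-- `P₋(n,k) = ∏_{j=0}^{k+1} (1 − j/n)`. -/
noncomputable def Pminus (n k : ℕ) : ℝ := ∏ j ∈ Finset.range (k + 2), (1 - (j : ℝ) / n)

/-- The exact finite-width RNN signal energy `Q_{n,k}` in product form. -/
noncomputable def Q (n k : ℕ) : ℝ :=
  ((n : ℝ) / ((k + 1) * (k + 2))) * (Pplus n k - Pminus n k)

/-- The exponent function `Ψ(x) = (1+x)log(1+x) − x`. -/
noncomputable def Psi (x : ℝ) : ℝ := (1 + x) * Real.log (1 + x) - x

lemma log_ge_one_sub_inv {x : ℝ} (hx : 0 < x) : 1 - 1/x ≤ Real.log x := by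
  have h := Real.log_le_sub_one_of_pos (show (0:ℝ) < 1/x by positivity)
  rw [one_div, Real.log_inv] at h
  have hinv : x⁻¹ = 1/x := (one_div x).symm
  linarith [h, hinv ▸ h]

lemma sum_range_cast_real (m : ℕ) : ∑ j ∈ Finset.range m, (j:ℝ) = m*(m-1)/2 := by
  induction m with
  | zero => simp
  | succ m ih => rw [Finset.sum_range_succ, ih]; push_cast; ring


lemma psi_bounds {a b : ℝ} (ha : 0 ≤ a) (hab : a ≤ b) :
    (b - a) * Real.log (1 + a) ≤ Psi b - Psi a ∧ Psi b - Psi a ≤ (b - a) * Real.log (1 + b) := by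
  have hA : (0:ℝ) < 1 + a := by linarith
  have hB : (0:ℝ) < 1 + b := by linarith
  have hlog1 : Real.log (1+b) - Real.log (1+a) ≤ (1+b)/(1+a) - 1 := by
    have h := Real.log_le_sub_one_of_pos (show (0:ℝ) < (1+b)/(1+a) by positivity)
    rwa [Real.log_div hB.ne' hA.ne'] at h
  have hlog2 : 1 - (1+a)/(1+b) ≤ Real.log (1+b) - Real.log (1+a) := by
    have h := log_ge_one_sub_inv (show (0:ℝ) < (1+b)/(1+a) by positivity)
    rw [Real.log_div hB.ne' hA.ne'] at h
    have : 1/((1+b)/(1+a)) = (1+a)/(1+b) := by field_simp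
    linarith [this ▸ h]
  have e1 : (1+b)*((1+a)/(1+b)) = 1+a := by field_simp
  have e2 : (1+a)*((1+b)/(1+a)) = 1+b := by field_simp
  unfold Psi
  constructor
  · nlinarith [mul_le_mul_of_nonneg_left hlog2 hB.le]
  · nlinarith [mul_le_mul_of_nonneg_left hlog1 hA.le]

lemma term_bound {x : ℝ} (hx0 : 0 ≤ x) (hx : x ≤ 1/2) :
    |Real.log (1-x) - Real.log (1+x) + 2*x| ≤ 2*x^2 := by
  have h1x : (0:ℝ) < 1 - x := by linarith
  have h2x : (0:ℝ) < 1 + x := by linarith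
  have l1 : Real.log (1-x) ≤ -x := by
    have := Real.log_le_sub_one_of_pos h1x; linarith
  have l2 : Real.log (1+x) ≤ x := by
    have := Real.log_le_sub_one_of_pos h2x; linarith
  have l3 : 1 - 1/(1+x) ≤ Real.log (1+x) := log_ge_one_sub_inv h2x
  have l4 : 1 - 1/(1-x) ≤ Real.log (1-x) := log_ge_one_sub_inv h1x
  have e3 : x - 2*x^2 ≤ 1 - 1/(1+x) := by
    have : 1/(1+x) ≤ 1 - x + 2*x^2 := by rw [div_le_iff₀ h2x]; nlinarith
    linarith
  have e4 : -2*x^2 - x ≤ 1 - 1/(1-x) := by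
    have : 1/(1-x) ≤ 1 + x + 2*x^2 := by rw [div_le_iff₀ h1x]; nlinarith
    linarith
  rw [abs_le]
  constructor <;> nlinarith

lemma main_pointwise (n K : ℕ) (hn : 8 ≤ n) (hr : (K:ℝ)/n ≤ 1/4) :
    0 < Pminus n K ∧ 0 < Pplus n K ∧
    |Real.log (Pminus n K / Pplus n K) + ((K:ℝ)+2)*((K:ℝ)+1)/n| ≤ 2*((K:ℝ)+2)^3/(n:ℝ)^2 ∧
    |Real.log (Pplus n K) - n * Psi ((K:ℝ)/n)| ≤ 3*((K:ℝ)+2)/n := by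
  have hn0 : 0 < n := by omega
  have hN : (0:ℝ) < n := by exact_mod_cast hn0
  have hN8 : (8:ℝ) ≤ n := by exact_mod_cast hn
  have h8 : (1:ℝ)/n ≤ 1/8 := by
    rw [div_le_div_iff₀ hN (by norm_num : (0:ℝ) < 8)]; linarith
  have hx : ∀ j ∈ Finset.range (K+2), 0 ≤ (j:ℝ)/n ∧ (j:ℝ)/n ≤ 1/2 := by
    intro j hj
    have hj' : (j:ℝ) ≤ (K:ℝ) + 1 := by
      have hh := Finset.mem_range.mp hj
      have : j ≤ K + 1 := by omega
      exact_mod_cast this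
    refine ⟨by positivity, ?_⟩
    have h1 : (j:ℝ)/n ≤ ((K:ℝ)+1)/n := by gcongr
    have h2 : ((K:ℝ)+1)/n = (K:ℝ)/n + 1/n := by ring
    linarith
  have hpos1 : ∀ j ∈ Finset.range (K+2), 0 < 1 - (j:ℝ)/n := by
    intro j hj; have := (hx j hj).2; linarith
  have hpos2 : ∀ j ∈ Finset.range (K+2), 0 < 1 + (j:ℝ)/n := by
    intro j hj; have := (hx j hj).1; linarith
  have hPm : 0 < Pminus n K := Finset.prod_pos hpos1
  have hPp : 0 < Pplus n K := Finset.prod_pos hpos2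
  have hlogm : Real.log (Pminus n K) = ∑ j ∈ Finset.range (K+2), Real.log (1 - (j:ℝ)/n) :=
    Real.log_prod fun j hj => (hpos1 j hj).ne'
  have hlogp : Real.log (Pplus n K) = ∑ j ∈ Finset.range (K+2), Real.log (1 + (j:ℝ)/n) :=
    Real.log_prod fun j hj => (hpos2 j hj).ne'
  refine ⟨hPm, hPp, ?_, ?_⟩
  · -- first estimate
    have hsum_id : ∑ j ∈ Finset.range (K+2), 2*((j:ℝ)/n) = ((K:ℝ)+2)*((K:ℝ)+1)/n := by
      have h := sum_range_cast_real (K+2)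
      calc ∑ j ∈ Finset.range (K+2), 2*((j:ℝ)/n)
          = (∑ j ∈ Finset.range (K+2), (j:ℝ)) * (2/(n:ℝ)) := by
            rw [Finset.sum_mul]; exact Finset.sum_congr rfl fun j _ => by ring
        _ = ((K:ℝ)+2)*((K:ℝ)+1)/n := by rw [h]; push_cast; ring
    have hrep : Real.log (Pminus n K / Pplus n K) + ((K:ℝ)+2)*((K:ℝ)+1)/n
        = ∑ j ∈ Finset.range (K+2),
            (Real.log (1 - (j:ℝ)/n) - Real.log (1 + (j:ℝ)/n) + 2*((j:ℝ)/n)) := by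
      rw [Real.log_div hPm.ne' hPp.ne', hlogm, hlogp, ← hsum_id, ← Finset.sum_sub_distrib,
        ← Finset.sum_add_distrib]
    rw [hrep]
    calc |∑ j ∈ Finset.range (K+2),
            (Real.log (1 - (j:ℝ)/n) - Real.log (1 + (j:ℝ)/n) + 2*((j:ℝ)/n))|
        ≤ ∑ j ∈ Finset.range (K+2),
            |Real.log (1 - (j:ℝ)/n) - Real.log (1 + (j:ℝ)/n) + 2*((j:ℝ)/n)| :=
          Finset.abs_sum_le_sum_abs _ _
      _ ≤ ∑ j ∈ Finset.range (K+2), 2*(((K:ℝ)+2)/n)^2 := by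
          apply Finset.sum_le_sum
          intro j hj
          refine le_trans (term_bound (hx j hj).1 (hx j hj).2) ?_
          have hj2 : (j:ℝ)/n ≤ ((K:ℝ)+2)/n := by
            have hh := Finset.mem_range.mp hj
            have : (j:ℝ) ≤ (K:ℝ) + 2 := by exact_mod_cast le_of_lt hh
            gcongr
          have h0 := (hx j hj).1
          nlinarith
      _ = 2*((K:ℝ)+2)^3/(n:ℝ)^2 := by
          rw [Finset.sum_const, Finset.card_range, nsmul_eq_mul]
          push_cast; field_simp
  · -- second estimate
    have hm : (0:ℝ) ≤ ((K:ℝ)+2)/n := by positivity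
    have hlogsmall : Real.log (1 + ((K:ℝ)+2)/n) ≤ ((K:ℝ)+2)/n := by
      have := Real.log_le_sub_one_of_pos (show (0:ℝ) < 1 + ((K:ℝ)+2)/n by linarith)
      linarith
    have hlognn : 0 ≤ Real.log (1 + ((K:ℝ)+2)/n) := Real.log_nonneg (by linarith)
    -- telescoping
    have htel : Psi (((K:ℝ)+2)/n)
        = ∑ j ∈ Finset.range (K+2), (Psi (((j:ℝ)+1)/n) - Psi ((j:ℝ)/n)) := by
      have h := Finset.sum_range_sub (fun j : ℕ => Psi ((j:ℝ)/n)) (K+2)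
      have h0 : Psi ((0:ℝ)/n) = 0 := by simp [Psi]
      push_cast at h
      rw [h]
      simp [Psi]
    have hlow : ∀ j ∈ Finset.range (K+2),
        Real.log (1 + (j:ℝ)/n) ≤ (n:ℝ) * (Psi (((j:ℝ)+1)/n) - Psi ((j:ℝ)/n)) := by
      intro j hj
      have ha : (0:ℝ) ≤ (j:ℝ)/n := (hx j hj).1
      have hab : (j:ℝ)/n ≤ ((j:ℝ)+1)/n := by gcongr <;> linarith
      have hb := (psi_bounds ha hab).1
      have he : ((j:ℝ)+1)/n - (j:ℝ)/n = 1/n := by ring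
      rw [he] at hb
      calc Real.log (1 + (j:ℝ)/n) = (n:ℝ) * (1/n * Real.log (1 + (j:ℝ)/n)) := by
            field_simp
        _ ≤ (n:ℝ) * (Psi (((j:ℝ)+1)/n) - Psi ((j:ℝ)/n)) := by
            apply mul_le_mul_of_nonneg_left hb hN.le
    have hhigh : ∀ j ∈ Finset.range (K+2),
        (n:ℝ) * (Psi (((j:ℝ)+1)/n) - Psi ((j:ℝ)/n)) ≤ Real.log (1 + ((j:ℝ)+1)/n) := by
      intro j hj
      have ha : (0:ℝ) ≤ (j:ℝ)/n := (hx j hj).1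
      have hab : (j:ℝ)/n ≤ ((j:ℝ)+1)/n := by gcongr <;> linarith
      have hb := (psi_bounds ha hab).2
      have he : ((j:ℝ)+1)/n - (j:ℝ)/n = 1/n := by ring
      rw [he] at hb
      calc (n:ℝ) * (Psi (((j:ℝ)+1)/n) - Psi ((j:ℝ)/n))
          ≤ (n:ℝ) * (1/n * Real.log (1 + ((j:ℝ)+1)/n)) :=
            mul_le_mul_of_nonneg_left hb hN.le
        _ = Real.log (1 + ((j:ℝ)+1)/n) := by field_simp
    have hshift : ∑ j ∈ Finset.range (K+2), Real.log (1 + ((j:ℝ)+1)/n)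
        = (∑ j ∈ Finset.range (K+2), Real.log (1 + (j:ℝ)/n)) + Real.log (1 + ((K:ℝ)+2)/n) := by
      have h1 := Finset.sum_range_succ' (fun j : ℕ => Real.log (1 + (j:ℝ)/n)) (K+2)
      have h2 := Finset.sum_range_succ (fun j : ℕ => Real.log (1 + (j:ℝ)/n)) (K+2)
      push_cast at h1 h2 ⊢
      simp only [Nat.cast_zero, zero_div, add_zero, Real.log_one] at h1
      rw [h1] at h2
      linarith [h2]
    have hsum_low : ∑ j ∈ Finset.range (K+2), Real.log (1 + (j:ℝ)/n)
        ≤ (n:ℝ) * Psi (((K:ℝ)+2)/n) := by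
      rw [htel, Finset.mul_sum]
      exact Finset.sum_le_sum hlow
    have hsum_high : (n:ℝ) * Psi (((K:ℝ)+2)/n)
        ≤ (∑ j ∈ Finset.range (K+2), Real.log (1 + (j:ℝ)/n)) + Real.log (1 + ((K:ℝ)+2)/n) := by
      rw [htel, Finset.mul_sum, ← hshift]
      exact Finset.sum_le_sum hhigh
    -- Psi increment from K/n to (K+2)/n
    have hKb : (0:ℝ) ≤ (K:ℝ)/n := by positivity
    have hstep := psi_bounds hKb (show (K:ℝ)/n ≤ ((K:ℝ)+2)/n by gcongr <;> linarith)
    have he2 : ((K:ℝ)+2)/n - (K:ℝ)/n = 2/n := by ring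
    rw [he2] at hstep
    have hstep_lo : 0 ≤ Psi (((K:ℝ)+2)/n) - Psi ((K:ℝ)/n) := by
      refine le_trans ?_ hstep.1
      have hlg : 0 ≤ Real.log (1 + (K:ℝ)/n) := Real.log_nonneg (by linarith)
      exact mul_nonneg (by positivity) hlg
    have hstep_hi : Psi (((K:ℝ)+2)/n) - Psi ((K:ℝ)/n) ≤ 2/n * (((K:ℝ)+2)/n) := by
      refine le_trans hstep.2 ?_
      gcongr
    have hmul_lo : 0 ≤ (n:ℝ) * Psi (((K:ℝ)+2)/n) - (n:ℝ) * Psi ((K:ℝ)/n) := by nlinarith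
    have hmul_hi : (n:ℝ) * Psi (((K:ℝ)+2)/n) - (n:ℝ) * Psi ((K:ℝ)/n) ≤ 2*(((K:ℝ)+2)/n) := by
      have h := mul_le_mul_of_nonneg_left hstep_hi hN.le
      have he3 : (n:ℝ) * (2/n * (((K:ℝ)+2)/n)) = 2*(((K:ℝ)+2)/n) := by
        field_simp
      linarith [h, he3]
    have hinvnn : (0:ℝ) ≤ 1/n := by positivity
    have h3 : 3*((K:ℝ)+2)/n = 3*(((K:ℝ)+2)/n) := by ring
    rw [hlogp, abs_le, h3]
    constructor
    · linarith [hsum_high, hmul_lo, hlogsmall, hm]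
    · linarith [hsum_low, hmul_hi, hm]

/-- In the supercritical sublinear regime `√n ≪ k ≪ n`:
`log(P₋/P₊) = −(k²/n)(1+o(1)) → −∞`, `log P₊ = nΨ(k/n) + o(1)`, and consequently
`Q_{n,k} = (n/((k+1)(k+2)))·exp(nΨ(k/n) + o(1))`. -/
theorem Q_supercritical_regime (k : ℕ → ℕ)
    (h1 : Tendsto (fun n => (k n : ℝ) / Real.sqrt n) atTop atTop)
    (h2 : Tendsto (fun n => (k n : ℝ) / n) atTop (nhds 0)) :
    Tendsto (fun n => Real.log (Pminus n (k n) / Pplus n (k n)) / (-(k n : ℝ) ^ 2 / n))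
        atTop (nhds 1) ∧
    Tendsto (fun n => Real.log (Pminus n (k n) / Pplus n (k n))) atTop atBot ∧
    Tendsto (fun n => Real.log (Pplus n (k n)) - n * Psi ((k n : ℝ) / n)) atTop (nhds 0) ∧
    Tendsto (fun n => Q n (k n) /
        (((n : ℝ) / ((k n + 1) * (k n + 2))) * Real.exp (n * Psi ((k n : ℝ) / n))))
      atTop (nhds 1) := by
  have hk_top : Tendsto (fun n => (k n : ℝ)) atTop atTop := by
    apply tendsto_atTop_mono' atTop _ h1
    filter_upwards [eventually_ge_atTop 1] with n hn
    have h1n : (1:ℝ) ≤ Real.sqrt n := by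
      rw [show (1:ℝ) = Real.sqrt 1 by simp]
      exact Real.sqrt_le_sqrt (by exact_mod_cast hn)
    exact div_le_self (by positivity) h1n
  have hksq : Tendsto (fun n => (k n:ℝ)^2 / n) atTop atTop := by
    apply (h1.atTop_mul_atTop₀ h1).congr'
    filter_upwards [eventually_ge_atTop 1] with n hn
    have hn0 : (0:ℝ) < n := by exact_mod_cast hn
    have hs : Real.sqrt n * Real.sqrt n = n := Real.mul_self_sqrt hn0.le
    rw [div_mul_div_comm, hs, ← sq]
  have hev : ∀ᶠ n in atTop, 8 ≤ n ∧ 1 ≤ k n ∧ (k n:ℝ)/n ≤ 1/4 := by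
    filter_upwards [eventually_ge_atTop 8, hk_top.eventually_ge_atTop 1,
      h2.eventually (gt_mem_nhds (show (0:ℝ) < 1/4 by norm_num))] with n ha hb hc
    exact ⟨ha, by exact_mod_cast hb, le_of_lt hc⟩
  -- part 3
  have part3 : Tendsto (fun n => Real.log (Pplus n (k n)) - n * Psi ((k n : ℝ) / n))
      atTop (nhds 0) := by
    apply squeeze_zero_norm' (a := fun n => 3*((k n:ℝ)+2)/n)
    · filter_upwards [hev] with n hn
      rw [Real.norm_eq_abs]
      exact (main_pointwise n (k n) hn.1 hn.2.2).2.2.2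
    · have he : (fun n : ℕ => 3*((k n:ℝ)+2)/n) = fun n => 3*((k n:ℝ)/n) + 6*(1/n) := by
        funext n; ring
      rw [he]
      have hone : Tendsto (fun n : ℕ => 1/(n:ℝ)) atTop (nhds 0) :=
        tendsto_one_div_atTop_nhds_zero_nat
      simpa using (h2.const_mul 3).add (hone.const_mul 6)
  -- part 1
  have hmm1 : Tendsto (fun n => ((k n:ℝ)+2)*((k n:ℝ)+1)/(k n:ℝ)^2) atTop (nhds 1) := by
    have hinv : Tendsto (fun n => ((k n:ℝ))⁻¹) atTop (nhds 0) := hk_top.inv_tendsto_atTop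
    have h := ((tendsto_const_nhds (x := (1:ℝ))).add (hinv.const_mul 2)).mul
      ((tendsto_const_nhds (x := (1:ℝ))).add hinv)
    norm_num at h
    apply h.congr'
    filter_upwards [hk_top.eventually_ge_atTop 1] with n hn
    have hk0 : (k n:ℝ) ≠ 0 := by linarith
    field_simp
  have hb0 : Tendsto (fun n => 54*((k n:ℝ)/n)) atTop (nhds 0) := by
    simpa using h2.const_mul 54
  have hpoint : ∀ᶠ n in atTop,
      ((k n:ℝ)+2)*((k n:ℝ)+1)/(k n:ℝ)^2 - 54*((k n:ℝ)/n) ≤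
        Real.log (Pminus n (k n) / Pplus n (k n)) / (-(k n : ℝ) ^ 2 / n) ∧
      Real.log (Pminus n (k n) / Pplus n (k n)) / (-(k n : ℝ) ^ 2 / n) ≤
        ((k n:ℝ)+2)*((k n:ℝ)+1)/(k n:ℝ)^2 + 54*((k n:ℝ)/n) := by
    filter_upwards [hev] with n hn
    obtain ⟨h8, hk1, hr⟩ := hn
    obtain ⟨_, _, hE, _⟩ := main_pointwise n (k n) h8 hr
    set K := (k n : ℝ) with hKdef
    set N := (n : ℝ) with hNdef
    set L := Real.log (Pminus n (k n) / Pplus n (k n)) with hLdef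
    have hKpos : (1:ℝ) ≤ K := by rw [hKdef]; exact_mod_cast hk1
    have hNpos : (0:ℝ) < N := by
      rw [hNdef]
      have : 0 < n := by omega
      exact_mod_cast this
    have hK0 : (0:ℝ) < K := by linarith
    have habs := abs_le.mp hE
    have hD : (0:ℝ) < K^2/N := by positivity
    have hEb : 2*(K+2)^3/N^2 ≤ 54*K^3/N^2 :=
      (div_le_div_iff_of_pos_right (by positivity)).mpr (by nlinarith)
    have hrw : L / (-K ^ 2 / N) = (-L) / (K^2/N) := by
      rw [neg_div, div_neg, ← neg_div]
    rw [hrw]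
    constructor
    · rw [le_div_iff₀ hD]
      have hexp : (((K+2)*(K+1)/K^2 - 54*(K/N)) * (K^2/N))
          = (K+2)*(K+1)/N - 54*K^3/N^2 := by field_simp
      rw [hexp]
      linarith [habs.1, habs.2, hEb]
    · rw [div_le_iff₀ hD]
      have hexp : (((K+2)*(K+1)/K^2 + 54*(K/N)) * (K^2/N))
          = (K+2)*(K+1)/N + 54*K^3/N^2 := by field_simp
      rw [hexp]
      linarith [habs.1, habs.2, hEb]
  have part1 : Tendsto (fun n => Real.log (Pminus n (k n) / Pplus n (k n)) /
      (-(k n : ℝ) ^ 2 / n)) atTop (nhds 1) := by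
    have hlo : Tendsto (fun n => ((k n:ℝ)+2)*((k n:ℝ)+1)/(k n:ℝ)^2 - 54*((k n:ℝ)/n))
        atTop (nhds 1) := by simpa using hmm1.sub hb0
    have hhi : Tendsto (fun n => ((k n:ℝ)+2)*((k n:ℝ)+1)/(k n:ℝ)^2 + 54*((k n:ℝ)/n))
        atTop (nhds 1) := by simpa using hmm1.add hb0
    exact tendsto_of_tendsto_of_tendsto_of_le_of_le' hlo hhi
      (hpoint.mono fun n h => h.1) (hpoint.mono fun n h => h.2)
  -- part 2
  have hbot : Tendsto (fun n => -(k n:ℝ)^2/(n:ℝ)) atTop atBot := by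
    have : (fun n : ℕ => -(k n:ℝ)^2/(n:ℝ)) = fun n => -((k n:ℝ)^2/(n:ℝ)) := by
      funext n; ring
    rw [this]
    exact tendsto_neg_atBot_iff.mpr hksq
  have part2 : Tendsto (fun n => Real.log (Pminus n (k n) / Pplus n (k n))) atTop atBot := by
    have h := part1.pos_mul_atBot one_pos hbot
    apply h.congr'
    filter_upwards [hev] with n hn
    obtain ⟨h8, hk1, _⟩ := hn
    have hK0 : (0:ℝ) < (k n:ℝ) := by
      have : 0 < k n := by omega
      exact_mod_cast this
    have hNpos : (0:ℝ) < (n:ℝ) := by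
      have : 0 < n := by omega
      exact_mod_cast this
    have hne : -(k n:ℝ)^2/(n:ℝ) ≠ 0 := by
      apply div_ne_zero _ hNpos.ne'
      simp only [neg_ne_zero]
      positivity
    rw [div_mul_cancel₀ _ hne]
  -- part 4
  have hexpA : Tendsto (fun n => Real.exp (Real.log (Pplus n (k n)) - n * Psi ((k n:ℝ)/n)))
      atTop (nhds 1) := by
    have := (Real.continuous_exp.tendsto 0).comp part3
    simpa [Function.comp_def] using this
  have hexpB : Tendsto (fun n => Real.exp (Real.log (Pminus n (k n) / Pplus n (k n))))
      atTop (nhds 0) := Real.tendsto_exp_atBot.comp part2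
  have part4 : Tendsto (fun n => Q n (k n) /
      (((n : ℝ) / ((k n + 1) * (k n + 2))) * Real.exp (n * Psi ((k n : ℝ) / n))))
      atTop (nhds 1) := by
    have h := hexpA.mul ((tendsto_const_nhds (x := (1:ℝ))).sub hexpB)
    norm_num at h
    apply h.congr'
    filter_upwards [hev] with n hn
    obtain ⟨h8, hk1, hr⟩ := hn
    obtain ⟨hPm, hPp, _, _⟩ := main_pointwise n (k n) h8 hr
    have hNpos : (0:ℝ) < (n:ℝ) := by
      have : 0 < n := by omega
      exact_mod_cast this
    have hKp : (0:ℝ) < ((k n:ℝ)+1)*((k n:ℝ)+2) := by positivity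
    rw [Real.exp_sub, Real.exp_log hPp, Real.exp_log (div_pos hPm hPp)]
    unfold Q
    field_simp
  exact ⟨part1, part2, part3, part4⟩
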